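/- arXiv:2003.04943 — 13 statements merged into one kernel-verified Lean document; each statement's English description precedes it below -/
import Mathlib

section
/- Let P be an orthomodular poset of finite height. Then for all x, y ∈ P, x ≤ y if and only if x → y = {1}. -/
/-- An orthomodular poset: a bounded poset with an antitone involution `compl`
that is a complementation (⊤ is the LUB and ⊥ the GLB of `{x, compl x}`),
in which joins of orthogonal pairs exist, satisfying the orthomodular law. -/
structure OrthomodularPoset (P : Type*) [PartialOrder P] [BoundedOrder P] where
  compl : P → P
  antitone : ∀ x y : P, x ≤ y → compl y ≤ compl x
  involution : ∀ x : P, compl (compl x) = x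
  lub_compl : ∀ x : P, IsLUB {x, compl x} ⊤
  glb_compl : ∀ x : P, IsGLB {x, compl x} ⊥
  join_of_orth : ∀ x y : P, x ≤ compl y → ∃ j : P, IsLUB {x, y} j
  orthomodular : ∀ x y j k : P, x ≤ y → IsLUB {compl y, x} j →
    IsLUB {compl j, x} k → k = y

/-- A poset is of finite height if every chain is finite. -/
def FiniteHeight (P : Type*) [PartialOrder P] : Prop :=
  ∀ C : Set P, IsChain (· ≤ ·) C → C.Finite

/-- `Max A`: the set of maximal elements of `A`. -/
def maxElems {P : Type*} [PartialOrder P] (A : Set P) : Set P :=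
  {m | m ∈ A ∧ ∀ x ∈ A, m ≤ x → m = x}

/-- The implication operator: `x → y := {y ∨ m | m ∈ Max L(x', y')}`,
where `y ∨ m` is expressed via `IsLUB`. -/
def ompImpl {P : Type*} [PartialOrder P] [BoundedOrder P] (O : OrthomodularPoset P)
    (x y : P) : Set P :=
  {z | ∃ m ∈ maxElems (lowerBounds {O.compl x, O.compl y}), IsLUB {y, m} z}

lemma exists_maxElems {P : Type*} [PartialOrder P] (hfin : FiniteHeight P)
    (A : Set P) (hA : A.Nonempty) : ∃ m, m ∈ maxElems A := by
  obtain ⟨a, ha⟩ := hA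
  obtain ⟨m, hm⟩ := zorn_le₀ A (fun c hcA hc => by
    rcases c.eq_empty_or_nonempty with rfl | hne
    · exact ⟨a, ha, by simp⟩
    · obtain ⟨u, huc, hu⟩ := Set.Finite.exists_maximalFor id c (hfin c hc) hne
      refine ⟨u, hcA huc, fun z hz => ?_⟩
      rcases hc.total hz huc with h | h
      · exact h
      · exact hu hz h)
  exact ⟨m, hm.1, fun z hz hle => le_antisymm hle (hm.2 hz hle)⟩

lemma omp_compl_top {P : Type*} [PartialOrder P] [BoundedOrder P] (O : OrthomodularPoset P) :
    O.compl ⊤ = ⊥ := by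
  have h := O.glb_compl ⊤
  exact le_antisymm (h.2 (fun z hz => by rcases hz with rfl | rfl <;> simp)) bot_le

/-- In an orthomodular poset of finite height, `x ≤ y` iff `x → y = {1}`. -/
theorem omp_le_iff_impl_eq_top {P : Type*} [PartialOrder P] [BoundedOrder P]
    (O : OrthomodularPoset P) (hfin : FiniteHeight P) (x y : P) :
    x ≤ y ↔ ompImpl O x y = {⊤} := by
  constructor
  · intro hxy
    have hcy : O.compl y ∈ maxElems (lowerBounds {O.compl x, O.compl y}) := by
      refine ⟨fun z hz => ?_, fun z hz hle => ?_⟩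
      · rcases hz with rfl | rfl
        · exact O.antitone x y hxy
        · exact le_rfl
      · exact le_antisymm hle (hz (by simp : O.compl y ∈ ({O.compl x, O.compl y} : Set P)))
    ext z
    simp only [Set.mem_singleton_iff]
    constructor
    · rintro ⟨m, hm, hlub⟩
      have hmy : m = O.compl y := hm.2 _ hcy.1 (hm.1 (by simp))
      subst hmy
      exact hlub.unique (O.lub_compl y)
    · rintro rfl
      exact ⟨O.compl y, hcy, O.lub_compl y⟩
  · intro himp
    -- lowerBounds is nonempty (⊥ is in it), get a maximal element m
    obtain ⟨m, hm⟩ := exists_maxElems hfin (lowerBounds {O.compl x, O.compl y})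
      ⟨⊥, fun z _ => bot_le⟩
    have hmy : m ≤ O.compl y := hm.1 (by simp)
    obtain ⟨j, hj⟩ := O.join_of_orth m y hmy
    rw [Set.pair_comm] at hj
    have hjmem : j ∈ ompImpl O x y := ⟨m, hm, hj⟩
    rw [himp] at hjmem
    have hjtop : j = ⊤ := hjmem
    subst hjtop
    -- orthomodular: m ≤ compl y, IsLUB {compl (compl y), m} ⊤, IsLUB {compl ⊤, m} m ⇒ m = compl y
    have hj' : IsLUB {O.compl (O.compl y), m} ⊤ := by rwa [O.involution]
    have hbot : IsLUB {O.compl ⊤, m} m := by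
      rw [omp_compl_top O]
      constructor
      · rintro z (rfl | rfl) <;> simp
      · exact fun z hz => hz (by simp : m ∈ ({⊥, m} : Set P))
    have hmeq : m = O.compl y := O.orthomodular m (O.compl y) ⊤ m hmy hj' hbot
    have : O.compl y ≤ O.compl x := hmeq ▸ hm.1 (by simp)
    have := O.antitone _ _ this
    rwa [O.involution, O.involution] at this
end

section
/- Let P be an orthomodular poset of finite height and x, y ∈ P with x ⊥ y (i.e. x ≤ y'). Then the join (x ∨ y)' ∨ y exists and x → y = {(x ∨ y)' ∨ y}. -/
/-- If `x ⊥ y` then the join `(x ∨ y)' ∨ y` exists and `x → y = {(x ∨ y)' ∨ y}`. -/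
theorem omp_impl_of_orth {P : Type*} [PartialOrder P] [BoundedOrder P]
    (O : OrthomodularPoset P) (hfin : FiniteHeight P) (x y : P)
    (hxy : x ≤ O.compl y) :
    ∃ j : P, IsLUB {x, y} j ∧ ∃ k : P, IsLUB {O.compl j, y} k ∧ ompImpl O x y = {k} := by
  obtain ⟨j, hj⟩ := O.join_of_orth x y hxy
  have hxj : x ≤ j := hj.1 (by simp)
  have hyj : y ≤ j := hj.1 (by simp)
  obtain ⟨k, hk⟩ := O.join_of_orth (O.compl j) y (O.antitone y j hyj)
  -- compl j is the greatest lower bound of {compl x, compl y}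
  have hmemL : O.compl j ∈ lowerBounds {O.compl x, O.compl y} := by
    rintro z (rfl | rfl)
    · exact O.antitone _ _ hxj
    · exact O.antitone _ _ hyj
  have hgreat : ∀ m ∈ lowerBounds {O.compl x, O.compl y}, m ≤ O.compl j := by
    intro m hm
    have hmx : m ≤ O.compl x := hm (by simp)
    have hmy : m ≤ O.compl y := hm (by simp)
    have hxm : x ≤ O.compl m := by
      have := O.antitone _ _ hmx; simpa [O.involution] using this
    have hym : y ≤ O.compl m := by
      have := O.antitone _ _ hmy; simpa [O.involution] using this
    have hjm : j ≤ O.compl m := hj.2 (by rintro z (rfl | rfl) <;> assumption)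
    have := O.antitone _ _ hjm
    simpa [O.involution] using this
  have hmax : maxElems (lowerBounds {O.compl x, O.compl y}) = {O.compl j} := by
    ext m
    constructor
    · rintro ⟨hm, hmaxm⟩
      exact hmaxm _ hmemL (hgreat m hm)
    · rintro rfl
      exact ⟨hmemL, fun z hz hle => le_antisymm hle (hgreat z hz)⟩
  refine ⟨j, hj, k, hk, ?_⟩
  ext z
  simp only [ompImpl, hmax, Set.mem_setOf_eq, Set.mem_singleton_iff]
  constructor
  · rintro ⟨m, rfl, hz⟩
    exact hz.unique (by rwa [Set.pair_comm] at hk)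
  · rintro rfl
    exact ⟨O.compl j, rfl, by rwa [Set.pair_comm] at hk⟩
end

section
/- Let P be an orthomodular poset of finite height and x, y ∈ P with x ⊥ y (i.e. x ≤ y'). Then for every a ∈ x → y, one has a → y = {x ∨ y}; in other words (x → y) → y = x ∨ y. -/
/-- If `x ⊥ y` then `(x → y) → y = x ∨ y`: for every `a ∈ x → y`
one has `a → y = {x ∨ y}`. -/
theorem omp_impl_impl_of_orth {P : Type*} [PartialOrder P] [BoundedOrder P]
    (O : OrthomodularPoset P) (hfin : FiniteHeight P) (x y : P)
    (hxy : x ≤ O.compl y) :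
    ∃ j : P, IsLUB {x, y} j ∧ ∀ a ∈ ompImpl O x y, ompImpl O a y = {j} := by

  obtain ⟨j, hj⟩ := O.join_of_orth x y hxy
  refine ⟨j, hj, ?_⟩
  rintro a ⟨m, ⟨hmL, hmMax⟩, hma⟩
  have hxj : x ≤ j := hj.1 (Set.mem_insert _ _)
  have hyj : y ≤ j := hj.1 (Set.mem_insert_of_mem _ rfl)
  have hjx' : O.compl j ≤ O.compl x := O.antitone _ _ hxj
  have hjy' : O.compl j ≤ O.compl y := O.antitone _ _ hyj
  have hmx' : m ≤ O.compl x := hmL (Set.mem_insert _ _)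
  have hmy' : m ≤ O.compl y := hmL (Set.mem_insert_of_mem _ rfl)
  have hxm : x ≤ O.compl m := by
    have := O.antitone _ _ hmx'; rwa [O.involution] at this
  have hym : y ≤ O.compl m := by
    have := O.antitone _ _ hmy'; rwa [O.involution] at this
  have hjm : j ≤ O.compl m := by
    refine hj.2 ?_
    intro z hz
    rcases hz with h | h
    · exact h ▸ hxm
    · exact h ▸ hym
  have hmj' : m ≤ O.compl j := by
    have := O.antitone _ _ hjm; rwa [O.involution] at this
  have hm_eq : m = O.compl j := by
    refine hmMax _ ?_ hmj'
    intro w hw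
    rcases hw with h | h
    · exact h ▸ hjx'
    · exact h ▸ hjy'
  subst hm_eq
  have hya : y ≤ a := hma.1 (Set.mem_insert _ _)
  have hja : O.compl j ≤ a := hma.1 (Set.mem_insert_of_mem _ rfl)
  have hya' : y ≤ O.compl x := by
    have := O.antitone _ _ hxy; rwa [O.involution] at this
  have hax' : a ≤ O.compl x := by
    refine hma.2 ?_
    intro z hz
    rcases hz with h | h
    · exact h ▸ hya'
    · exact h ▸ hjx'
  have hxa' : x ≤ O.compl a := by
    have := O.antitone _ _ hax'; rwa [O.involution] at this
  have ha'j : O.compl a ≤ j := by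
    have := O.antitone _ _ hja; rwa [O.involution] at this
  have ha'y' : O.compl a ≤ O.compl y := O.antitone _ _ hya
  have hlub : IsLUB {y, O.compl a} j := by
    constructor
    · intro z hz
      rcases hz with h | h
      · exact h ▸ hyj
      · exact h ▸ ha'j
    · intro u hu
      have hyu : y ≤ u := hu (Set.mem_insert _ _)
      have ha'u : O.compl a ≤ u := hu (Set.mem_insert_of_mem _ rfl)
      refine hj.2 ?_
      intro z hz
      rcases hz with h | h
      · exact h ▸ (le_trans hxa' ha'u)
      · exact h ▸ hyu
  have ha'mem : O.compl a ∈ maxElems (lowerBounds {O.compl a, O.compl y}) := by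
    constructor
    · intro w hw
      rcases hw with h | h
      · exact h ▸ le_refl _
      · exact h ▸ ha'y'
    · intro w hw hle
      exact le_antisymm hle (hw (Set.mem_insert _ _))
  ext z
  constructor
  · rintro ⟨n, ⟨hnL, hnMax⟩, hnz⟩
    have hn_eq : n = O.compl a := hnMax _ ha'mem.1 (hnL (Set.mem_insert _ _))
    subst hn_eq
    exact hnz.unique hlub
  · rintro rfl
    exact ⟨O.compl a, ha'mem, hlub⟩
end

section
/- Let P be an orthomodular poset of finite height and x, y ∈ P with y ≤ x. Then the join x' ∨ y exists and x → y = {x' ∨ y}. -/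
/-- If `y ≤ x` then the join `x' ∨ y` exists and `x → y = {x' ∨ y}`. -/
theorem omp_impl_of_ge {P : Type*} [PartialOrder P] [BoundedOrder P]
    (O : OrthomodularPoset P) (hfin : FiniteHeight P) (x y : P)
    (hyx : y ≤ x) :
    ∃ k : P, IsLUB {O.compl x, y} k ∧ ompImpl O x y = {k} := by
  have hcc : O.compl x ≤ O.compl y := O.antitone _ _ hyx
  obtain ⟨k, hk⟩ := O.join_of_orth (O.compl x) y hcc
  refine ⟨k, hk, ?_⟩
  have hmax : maxElems (lowerBounds {O.compl x, O.compl y}) = {O.compl x} := by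
    ext m
    simp only [maxElems, lowerBounds, Set.mem_setOf_eq, Set.mem_insert_iff,
      Set.mem_singleton_iff, forall_eq_or_imp, forall_eq]
    constructor
    · rintro ⟨⟨h1, h2⟩, hm⟩
      exact hm (O.compl x) ⟨le_refl _, hcc⟩ h1
    · rintro rfl
      exact ⟨⟨le_refl _, hcc⟩, fun z hz hle => le_antisymm hle hz.1⟩
  ext z
  simp only [ompImpl, hmax, Set.mem_setOf_eq, Set.mem_singleton_iff, exists_eq_left]
  constructor
  · rintro h
    exact h.unique (by rwa [Set.pair_comm])
  · rintro rfl
    rwa [Set.pair_comm]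
end

section
/- Let P be an orthomodular poset of finite height and x, y ∈ P with x ≤ y. Then for every a ∈ y' → x, every b ∈ a → x, every c ∈ b' → x and every d ∈ c → x, one has d = y; in other words (((y' → x) → x)' → x) → x = y. -/
section Aux

variable {P : Type*} [PartialOrder P]

lemma memLB_left {u v m : P} (h : m ∈ lowerBounds {u, v}) : m ≤ u :=
  h (Set.mem_insert _ _)

lemma memLB_right {u v m : P} (h : m ∈ lowerBounds {u, v}) : m ≤ v :=
  h (Set.mem_insert_of_mem _ rfl)

lemma mkLB {u v m : P} (h1 : m ≤ u) (h2 : m ≤ v) : m ∈ lowerBounds {u, v} := by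
  intro z hz
  simp only [Set.mem_insert_iff, Set.mem_singleton_iff] at hz
  rcases hz with rfl | rfl
  · exact h1
  · exact h2

lemma mkUB {u v m : P} (h1 : u ≤ m) (h2 : v ≤ m) : m ∈ upperBounds {u, v} := by
  intro z hz
  simp only [Set.mem_insert_iff, Set.mem_singleton_iff] at hz
  rcases hz with rfl | rfl
  · exact h1
  · exact h2

lemma lub_left {u v a : P} (h : IsLUB {u, v} a) : u ≤ a :=
  h.1 (Set.mem_insert _ _)

lemma lub_right {u v a : P} (h : IsLUB {u, v} a) : v ≤ a :=
  h.1 (Set.mem_insert_of_mem _ rfl)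

variable [BoundedOrder P] (O : OrthomodularPoset P)

/-- Key lemma: if `x ≤ y` and `m` is a maximal lower bound of `{y, x'}`,
then the join of `x` and `m` equals `y`. -/
lemma lemA {x y m a : P} (hxy : x ≤ y)
    (hm : m ∈ maxElems (lowerBounds {y, O.compl x}))
    (hma : IsLUB {x, m} a) : a = y := by
  obtain ⟨hmL, hmMax⟩ := hm
  have hmy : m ≤ y := memLB_left hmL
  have hmx' : m ≤ O.compl x := memLB_right hmL
  have hxa : x ≤ a := lub_left hma
  have hmA : m ≤ a := lub_right hma
  have hay : a ≤ y := hma.2 (mkUB hxy hmy)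
  -- s := y' ∨ a
  obtain ⟨s, hs⟩ := O.join_of_orth (O.compl y) a (O.antitone _ _ hay)
  have has : a ≤ s := lub_right hs
  have hy's : O.compl y ≤ s := lub_left hs
  have hs'a : O.compl s ≤ O.compl a := O.antitone _ _ has
  -- k := s' ∨ a, which equals y by orthomodularity
  obtain ⟨k, hk⟩ := O.join_of_orth (O.compl s) a hs'a
  have hky : k = y := O.orthomodular a y s k hay hs hk
  -- t := m ∨ s'
  have hms : m ≤ O.compl (O.compl s) := by rw [O.involution]; exact le_trans hmA has
  obtain ⟨t, ht⟩ := O.join_of_orth m (O.compl s) hms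
  have hs'y : O.compl s ≤ y := by
    have := O.antitone _ _ hy's
    rwa [O.involution] at this
  have hs'x' : O.compl s ≤ O.compl x := O.antitone _ _ (le_trans hxa has)
  have hty : t ≤ y := ht.2 (mkUB hmy hs'y)
  have htx' : t ≤ O.compl x := ht.2 (mkUB hmx' hs'x')
  have hmt : m = t := hmMax t (mkLB hty htx') (lub_left ht)
  have hs'm : O.compl s ≤ m := hmt ▸ lub_right ht
  -- s' is a lower bound of {a, a'}, hence s' = ⊥
  have hs'bot : O.compl s ≤ (⊥ : P) :=
    (O.glb_compl a).2 (mkLB (le_trans hs'm hmA) hs'a)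
  have hs'eq : O.compl s = (⊥ : P) := le_antisymm hs'bot bot_le
  -- hence k = a
  have hak : IsLUB {O.compl s, a} a := by
    rw [hs'eq]
    exact ⟨mkUB bot_le le_rfl, fun z hz => hz (Set.mem_insert_of_mem _ rfl)⟩
  exact (hak.unique hk) ▸ hky

/-- If `x ≤ a`, the unique maximal lower bound of `{a', x'}` is `a'`. -/
lemma lemB {x a n : P} (hxa : x ≤ a)
    (hn : n ∈ maxElems (lowerBounds {O.compl a, O.compl x})) : n = O.compl a :=
  hn.2 _ (mkLB le_rfl (O.antitone _ _ hxa)) (memLB_left hn.1)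

end Aux

/-- If `x ≤ y` then `(((y' → x) → x)' → x) → x = y`. -/
theorem omp_orthomodular_impl {P : Type*} [PartialOrder P] [BoundedOrder P]
    (O : OrthomodularPoset P) (hfin : FiniteHeight P) (x y : P)
    (hxy : x ≤ y) :
    ∀ a ∈ ompImpl O (O.compl y) x, ∀ b ∈ ompImpl O a x,
      ∀ c ∈ ompImpl O (O.compl b) x, ∀ d ∈ ompImpl O c x, d = y := by
  intro a ha b hb c hc d hd
  obtain ⟨m, hm, hma⟩ := ha
  rw [O.involution] at hm
  -- Step 1: a = y
  have hay : a = y := lemA O hxy hm hma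
  have hxa : x ≤ a := lub_left hma
  -- Step 2: b = x ∨ a'
  obtain ⟨n, hn, hnb⟩ := hb
  have hn' : n = O.compl a := lemB O hxa hn
  rw [hn', Set.pair_comm] at hnb
  -- hnb : IsLUB {a', x} b
  have hxb : x ≤ b := lub_right hnb
  -- k := b' ∨ x equals a by orthomodularity
  obtain ⟨k, hk0⟩ := O.join_of_orth (O.compl b) x (O.antitone _ _ hxb)
  have hka : k = a := O.orthomodular x a b k hxa hnb hk0
  -- Step 3: c = b
  obtain ⟨p, hp, hpc⟩ := hc
  rw [O.involution] at hp
  have hpb : p ≤ b := memLB_left hp.1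
  have hpx' : p ≤ O.compl x := memLB_right hp.1
  have hpa' : p ≤ O.compl a := by
    have h1 : O.compl b ≤ O.compl p := O.antitone _ _ hpb
    have h2 : x ≤ O.compl p := by
      have := O.antitone _ _ hpx'
      rwa [O.involution] at this
    have hkp : k ≤ O.compl p := hk0.2 (mkUB h1 h2)
    have := O.antitone _ _ hkp
    rw [O.involution, hka] at this
    exact this
  have ha'LB : O.compl a ∈ lowerBounds {b, O.compl x} :=
    mkLB (lub_left hnb) (O.antitone _ _ hxa)
  have hpeq : p = O.compl a := hp.2 _ ha'LB hpa'
  rw [hpeq, Set.pair_comm] at hpc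
  -- hpc : IsLUB {a', x} c, so c = b
  have hcb : c = b := hpc.unique hnb
  -- Step 4: d = x ∨ b' = a = y
  obtain ⟨q, hq, hqd⟩ := hd
  rw [hcb] at hq
  have hq' : q = O.compl b := lemB O hxb hq
  rw [hq', Set.pair_comm] at hqd
  have : d = a := O.orthomodular x a b d hxa hnb hqd
  rw [this, hay]
end

section
/- Let P be an orthomodular poset of finite height. Then for every x ∈ P and every a ∈ x' → x, one has a → x = {1}; in other words (x' → x) → x = 1. -/
/-- `(x' → x) → x = 1`: for every `a ∈ x' → x`, one has `a → x = {1}`. -/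
theorem omp_compl_impl_self_impl {P : Type*} [PartialOrder P] [BoundedOrder P]
    (O : OrthomodularPoset P) (hfin : FiniteHeight P) (x : P) :
    ∀ a ∈ ompImpl O (O.compl x) x, ompImpl O a x = {⊤} := by
  intro a ha
  obtain ⟨m, ⟨hmL, _⟩, hlub⟩ := ha
  -- m is a lower bound of {x, x'}, hence m ≤ ⊥, so m = ⊥
  have hm_bot : m = ⊥ := by
    have : m ∈ lowerBounds {x, O.compl x} := by
      rwa [O.involution x] at hmL
    exact le_antisymm ((O.glb_compl x).2 this) bot_le
  -- a = x
  have hax : a = x := by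
    subst hm_bot
    have h1 : x ≤ a := hlub.1 (by simp)
    have h2 : a ≤ x := hlub.2 (by
      intro z hz
      rcases hz with rfl | hz
      · exact le_rfl
      · simp at hz; simp [hz])
    exact le_antisymm h2 h1
  subst hax
  ext z
  simp only [Set.mem_singleton_iff]
  constructor
  · rintro ⟨n, ⟨hnL, hnMax⟩, hz⟩
    have hn : n = O.compl a := by
      apply hnMax
      · intro w hw
        rcases hw with rfl | hw <;> simp_all
      · exact hnL (by simp)
    subst hn
    exact hz.unique (O.lub_compl a)
  · rintro rfl
    refine ⟨O.compl a, ⟨?_, ?_⟩, O.lub_compl a⟩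
    · intro w hw
      rcases hw with rfl | hw <;> simp_all
    · intro w hwL hle
      exact le_antisymm hle (hwL (by simp))
end

section
/- Let P be an orthomodular poset of finite height. Then for all x, y ∈ P and every a ∈ y → x, one has x → a = {1}; in other words x → (y → x) = 1. -/
/-- `x → (y → x) = 1`: for every `a ∈ y → x`, one has `x → a = {1}`. -/
theorem omp_impl_impl_self {P : Type*} [PartialOrder P] [BoundedOrder P]
    (O : OrthomodularPoset P) (hfin : FiniteHeight P) (x y : P) :
    ∀ a ∈ ompImpl O y x, ompImpl O x a = {⊤} := by
  rintro a ⟨m, hm, hlub⟩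
  have hxa : x ≤ a := hlub.1 (by simp)
  have hax : O.compl a ≤ O.compl x := O.antitone _ _ hxa
  have hlb : lowerBounds {O.compl x, O.compl a} = Set.Iic (O.compl a) := by
    ext z
    constructor
    · intro hz; exact hz (by simp)
    · intro hz
      rintro w (rfl | rfl)
      · exact le_trans hz hax
      · exact hz
  have hmax : maxElems (lowerBounds {O.compl x, O.compl a}) = {O.compl a} := by
    rw [hlb]
    ext z
    constructor
    · rintro ⟨hz1, hz2⟩
      exact hz2 (O.compl a) le_rfl hz1
    · rintro rfl
      exact ⟨le_rfl, fun w hw h => le_antisymm h hw⟩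
  ext z
  simp only [ompImpl, hmax, Set.mem_setOf_eq, Set.mem_singleton_iff]
  constructor
  · rintro ⟨m', rfl, hz⟩
    exact hz.unique (O.lub_compl a)
  · rintro rfl
    exact ⟨O.compl a, rfl, O.lub_compl a⟩
end

section
/- Let P be an orthomodular poset of finite height. Then for all x, y ∈ P, the set x → y is nonempty, i.e. the implication operator is everywhere defined. -/
/-- In an orthomodular poset of finite height the implication is everywhere
defined: `x → y` is nonempty for all `x, y`. -/
theorem omp_impl_nonempty {P : Type*} [PartialOrder P] [BoundedOrder P]
    (O : OrthomodularPoset P) (hfin : FiniteHeight P) (x y : P) :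
    (ompImpl O x y).Nonempty := by
  -- the set of lower bounds is nonempty (contains ⊥)
  have hbot : (⊥ : P) ∈ lowerBounds {O.compl x, O.compl y} := fun z _ => bot_le
  -- every nonempty set has a maximal element, by Zorn with finite chains
  obtain ⟨m, _, hm, hmax⟩ :=
    zorn_le_nonempty₀ (lowerBounds {O.compl x, O.compl y})
      (fun c hcs hc z hz => by
        have hcfin : c.Finite := hfin c hc
        obtain ⟨u, hu, humax⟩ := Set.Finite.exists_maximalFor id c hcfin ⟨z, hz⟩
        refine ⟨u, hcs hu, fun w hw => ?_⟩
        rcases hc.total hw hu with h | h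
        · exact h
        · exact humax hw h)
      ⊥ hbot
  have hm' : m ∈ maxElems (lowerBounds {O.compl x, O.compl y}) :=
    ⟨hm, fun w hw hmw => le_antisymm hmw (hmax hw hmw)⟩
  have hmy : m ≤ O.compl y := hm (Set.mem_insert_of_mem _ rfl)
  have hym : y ≤ O.compl m := by
    have := O.antitone _ _ hmy
    rwa [O.involution] at this
  obtain ⟨j, hj⟩ := O.join_of_orth y m hym
  exact ⟨j, m, hm', hj⟩
end

section
/- Let P be an orthomodular poset of finite height and x, y, z ∈ P with x ≤ y. Then for every u ∈ y → z there exists t ∈ x → z with u ≤ t; consequently (y → z) → (x → z) = 1 (i.e. for every u ∈ y → z there exists t ∈ x → z with u → t = {1}). -/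
lemma exists_maxElem_above {P : Type*} [PartialOrder P] (hfin : FiniteHeight P)
    (S : Set P) (m : P) (hm : m ∈ S) : ∃ t ∈ maxElems S, m ≤ t := by
  obtain ⟨t, hmt, htS, hmax⟩ := zorn_le_nonempty₀ S (fun c hcs hc y hy => by
    have hfin' := hfin c hc
    obtain ⟨ub, hub, hmaxub⟩ := Set.Finite.exists_maximalFor id c hfin' ⟨y, hy⟩
    refine ⟨ub, hcs hub, fun w hw => ?_⟩
    rcases hc.total hw hub with h | h
    · exact h
    · exact hmaxub hw h) m hm
  exact ⟨t, ⟨htS, fun w hw htw => le_antisymm htw (hmax hw htw)⟩, hmt⟩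

lemma omp_impl_self_top {P : Type*} [PartialOrder P] [BoundedOrder P]
    (O : OrthomodularPoset P) {u t : P} (hut : u ≤ t) :
    ompImpl O u t = {⊤} := by
  have hctu : O.compl t ≤ O.compl u := O.antitone _ _ hut
  ext w
  simp only [ompImpl, Set.mem_setOf_eq, Set.mem_singleton_iff]
  constructor
  · rintro ⟨m, ⟨hmL, hmax⟩, hlub⟩
    have hmct : m ≤ O.compl t := hmL (Set.mem_insert_of_mem _ rfl)
    have hctL : O.compl t ∈ lowerBounds {O.compl u, O.compl t} := by
      intro a ha
      rcases ha with rfl | ha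
      · exact hctu
      · exact Set.mem_singleton_iff.mp ha ▸ le_rfl
    have : m = O.compl t := hmax _ hctL hmct
    subst this
    exact hlub.unique (O.lub_compl t)
  · rintro rfl
    refine ⟨O.compl t, ⟨?_, ?_⟩, O.lub_compl t⟩
    · intro a ha
      rcases ha with rfl | ha
      · exact hctu
      · exact Set.mem_singleton_iff.mp ha ▸ le_rfl
    · intro w hw hle
      exact le_antisymm hle (hw (Set.mem_insert_of_mem _ rfl))

/-- If `x ≤ y` then for every `u ∈ y → z` there exists `t ∈ x → z` with
`u ≤ t`; consequently `(y → z) → (x → z) = 1`, i.e. `u → t = {1}`. -/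
theorem omp_impl_antitone {P : Type*} [PartialOrder P] [BoundedOrder P]
    (O : OrthomodularPoset P) (hfin : FiniteHeight P) (x y z : P)
    (hxy : x ≤ y) :
    ∀ u ∈ ompImpl O y z, ∃ t ∈ ompImpl O x z, u ≤ t ∧ ompImpl O u t = {⊤} := by
  rintro u ⟨m, ⟨hmL, hmax⟩, hlub⟩
  have hcyx : O.compl y ≤ O.compl x := O.antitone _ _ hxy
  have hmS : m ∈ lowerBounds {O.compl x, O.compl z} := by
    intro a ha
    rcases ha with rfl | ha
    · exact (hmL (Set.mem_insert _ _)).trans hcyx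
    · exact Set.mem_singleton_iff.mp ha ▸ hmL (Set.mem_insert_of_mem _ rfl)
  obtain ⟨m', hm'max, hmm'⟩ := exists_maxElem_above hfin _ m hmS
  have hm'cz : m' ≤ O.compl z := hm'max.1 (Set.mem_insert_of_mem _ rfl)
  have hzcm' : z ≤ O.compl m' := by
    have := O.antitone _ _ hm'cz
    rwa [O.involution] at this
  obtain ⟨t, htlub⟩ := O.join_of_orth z m' hzcm'
  refine ⟨t, ⟨m', hm'max, htlub⟩, ?_, ?_⟩
  · refine hlub.2 ?_
    intro a ha
    rcases ha with rfl | ha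
    · exact htlub.1 (Set.mem_insert _ _)
    · exact Set.mem_singleton_iff.mp ha ▸ hmm'.trans (htlub.1 (Set.mem_insert_of_mem _ rfl))
  · apply omp_impl_self_top
    refine hlub.2 ?_
    intro a ha
    rcases ha with rfl | ha
    · exact htlub.1 (Set.mem_insert _ _)
    · exact Set.mem_singleton_iff.mp ha ▸ hmm'.trans (htlub.1 (Set.mem_insert_of_mem _ rfl))
end

section
/- Let I be a set with a distinguished element 0 and let f : I × I → (nonempty subsets of I) be a map such that for every a ∈ I the set ⋃_{b ∈ f(a,0)} f(b,0) equals the singleton {a} (the involution axiom x'' ≈ x interpreted setwise, where x' abbreviates x → 0). Then for every a ∈ I the set f(a,0) is a singleton. -/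
/-- Lemma 2: in an implication orthomodular poset, `a' = a → 0` is a singleton.
Only the (setwise) involution axiom `x'' ≈ x` is needed: if
`⋃ b ∈ f a 0, f b 0 = {a}` for every `a`, then every `f a 0` is a singleton. -/
theorem impl_zero_singleton {I : Type*} (z : I) (f : I → I → Set I)
    (hne : ∀ a b : I, (f a b).Nonempty)
    (hinv : ∀ a : I, (⋃ b ∈ f a z, f b z) = {a}) :
    ∀ a : I, ∃ b : I, f a z = {b} := by
  intro a
  obtain ⟨b, hb⟩ := hne a z
  refine ⟨b, ?_⟩
  have hsub : f b z ⊆ {a} := by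
    rw [← hinv a]
    exact Set.subset_biUnion_of_mem (u := fun x => f x z) hb
  have hba : f b z = {a} := by
    obtain ⟨c, hc⟩ := hne b z
    have : c = a := hsub hc
    apply Set.Subset.antisymm hsub
    intro x hx
    rw [Set.mem_singleton_iff] at hx
    subst hx
    exact this ▸ hc
  have := hinv b
  rw [hba] at this
  simpa using this
end

section
/- Let P be an orthomodular poset of finite height. Then the orthomodular poset can be recovered from its implication operator: for all x, y ∈ P, x ≤ y holds if and only if x → y = {1}, and for every x ∈ P, x → 0 = {x'}; consequently the bounded poset structure, the orthocomplementation and hence the whole orthomodular poset assigned to the implication operator coincide with the original one (P(I(P)) = P). -/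
/-- In a finite-height poset, any nonempty set has a maximal element above any element. -/
lemma exists_maxElem {P : Type*} [PartialOrder P] [OrderBot P]
    (hfin : FiniteHeight P) (S : Set P) (hS : ⊥ ∈ S) :
    ∃ m, m ∈ maxElems S := by
  obtain ⟨m, hm⟩ := zorn_le₀ S (by
    intro c hc hchain
    rcases c.eq_empty_or_nonempty with rfl | ⟨y, hy⟩
    · exact ⟨⊥, hS, by simp⟩
    · have hcf : c.Finite := hfin c hchain
      obtain ⟨ub, hub, hmax⟩ := Set.Finite.exists_maximalFor id c hcf ⟨y, hy⟩
      refine ⟨ub, hc hub, fun z hz => ?_⟩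
      rcases hchain.total hub hz with h | h
      · exact (hmax hz h).ge
      · exact h)
  exact ⟨m, hm.1, fun x hx hle => le_antisymm hle (hm.2 hx hle)⟩

lemma omp_compl_bot {P : Type*} [PartialOrder P] [BoundedOrder P] (O : OrthomodularPoset P) :
    O.compl ⊥ = ⊤ :=
  le_antisymm le_top ((O.lub_compl ⊥).2 (by simp))

/-- The orthomodular poset can be recovered from its assigned implication
operator (`ℙ(𝕀(𝐏)) = 𝐏`): the order is recovered via `x ≤ y ↔ x → y = {1}`
and the orthocomplementation via `x → 0 = {x'}`. -/
theorem omp_recover {P : Type*} [PartialOrder P] [BoundedOrder P]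
    (O : OrthomodularPoset P) (hfin : FiniteHeight P) :
    (∀ x y : P, ompImpl O x y = {⊤} ↔ x ≤ y) ∧
    (∀ x : P, ompImpl O x ⊥ = {O.compl x}) := by
  constructor
  · intro x y
    constructor
    · intro heq
      -- get a maximal element of the lower bounds
      have hbot : (⊥ : P) ∈ lowerBounds {O.compl x, O.compl y} := fun a _ => bot_le
      obtain ⟨m, hmA, hmmax⟩ := exists_maxElem hfin _ hbot
      have hmy : m ≤ O.compl y := hmA (by simp)
      have hmx : m ≤ O.compl x := hmA (by simp)
      obtain ⟨j, hj⟩ := O.join_of_orth m y hmy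
      rw [Set.pair_comm] at hj
      have hjmem : j ∈ ompImpl O x y := ⟨m, ⟨hmA, hmmax⟩, hj⟩
      rw [heq] at hjmem
      subst hjmem
      -- orthomodularity: m ≤ y', lub {y, m} = ⊤ so lub {compl y', m} = ⊤,
      -- and lub {compl ⊤, m} = lub {⊥, m} = m, hence m = compl y
      have hlub1 : IsLUB {O.compl (O.compl y), m} ⊤ := by
        rw [O.involution]; exact hj
      have hlub2 : IsLUB {O.compl ⊤, m} m := by
        rw [omp_compl_top O]
        constructor
        · rintro a (rfl | rfl) <;> simp
        · intro a ha; exact ha (by simp)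
      have hmy' : m = O.compl y := O.orthomodular m (O.compl y) ⊤ m hmy hlub1 hlub2
      -- hence compl y ≤ compl x, so x ≤ y
      have : O.compl y ≤ O.compl x := hmy' ▸ hmx
      have h2 := O.antitone _ _ this
      rwa [O.involution, O.involution] at h2
    · intro hxy
      have hyx : O.compl y ≤ O.compl x := O.antitone _ _ hxy
      have hmax : maxElems (lowerBounds {O.compl x, O.compl y}) = {O.compl y} := by
        ext m
        have hyin : O.compl y ∈ lowerBounds {O.compl x, O.compl y} := by
          rintro a (rfl | rfl); exacts [hyx, le_rfl]
        constructor
        · rintro ⟨hmA, hmmax⟩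
          exact hmmax _ hyin (hmA (by simp))
        · rintro rfl
          exact ⟨hyin, fun n hn hle => le_antisymm hle (hn (by simp))⟩
      ext z
      simp only [ompImpl, hmax, Set.mem_singleton_iff, Set.mem_setOf_eq]
      constructor
      · rintro ⟨m, rfl, hz⟩
        exact hz.unique (O.lub_compl y)
      · rintro rfl
        exact ⟨O.compl y, rfl, O.lub_compl y⟩
  · intro x
    have hmax : maxElems (lowerBounds {O.compl x, O.compl ⊥}) = {O.compl x} := by
      rw [omp_compl_bot O]
      ext m
      have hxin : O.compl x ∈ lowerBounds {O.compl x, ⊤} := by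
        rintro a (rfl | rfl); exacts [le_rfl, le_top]
      constructor
      · rintro ⟨hmA, hmmax⟩
        exact hmmax _ hxin (hmA (by simp))
      · rintro rfl
        exact ⟨hxin, fun n hn hle => le_antisymm hle (hn (by simp))⟩
    ext z
    simp only [ompImpl, hmax, Set.mem_singleton_iff, Set.mem_setOf_eq]
    have hlub : IsLUB {(⊥ : P), O.compl x} (O.compl x) := by
      constructor
      · rintro a (rfl | rfl) <;> simp
      · intro a ha; exact ha (by simp)
    constructor
    · rintro ⟨m, rfl, hz⟩
      exact hz.unique hlub
    · rintro rfl
      exact ⟨O.compl x, rfl, hlub⟩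
end

section
/- Let P be an orthomodular poset of finite height. Then the implication operator satisfies condition (C): for all x, y ∈ P, x → y = { v | there exists u ∈ P with u ≤ x', u ≤ y', u maximal with these properties (i.e. for all w, if u ≤ w, w ≤ x' and w ≤ y' then u = w), and v ∈ a → u for some a ∈ y → u }; equivalently, x → y equals the set of all elements of the form (y → u) → u where u ranges over Max L(x', y'). -/
section Aux

variable {P : Type*} [PartialOrder P] [BoundedOrder P]

omit [BoundedOrder P] in
lemma mem_lb_pair {a b c : P} :
    c ∈ lowerBounds ({a, b} : Set P) ↔ c ≤ a ∧ c ≤ b := by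
  constructor
  · intro h
    exact ⟨h (Set.mem_insert _ _), h (Set.mem_insert_of_mem _ rfl)⟩
  · rintro ⟨h1, h2⟩ s hs
    simp only [Set.mem_insert_iff, Set.mem_singleton_iff] at hs
    rcases hs with rfl | rfl
    · exact h1
    · exact h2

omit [BoundedOrder P] in
lemma mem_ub_pair {a b c : P} :
    c ∈ upperBounds ({a, b} : Set P) ↔ a ≤ c ∧ b ≤ c := by
  constructor
  · intro h
    exact ⟨h (Set.mem_insert _ _), h (Set.mem_insert_of_mem _ rfl)⟩
  · rintro ⟨h1, h2⟩ s hs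
    simp only [Set.mem_insert_iff, Set.mem_singleton_iff] at hs
    rcases hs with rfl | rfl
    · exact h1
    · exact h2

/-- Key lemma: if `u ≤ q` and `n` is a maximal common lower bound of `q` and `u'`,
then `q` is the least upper bound of `{u, n}`. -/
lemma omp_key (O : OrthomodularPoset P) {u q n : P} (huq : u ≤ q)
    (hn : n ∈ maxElems (lowerBounds {q, O.compl u})) : IsLUB {u, n} q := by
  obtain ⟨hnlb, hnmax⟩ := hn
  obtain ⟨hnq, hnu⟩ := mem_lb_pair.mp hnlb
  have hq'u' : O.compl q ≤ O.compl u := O.antitone u q huq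
  obtain ⟨c, hc⟩ := O.join_of_orth (O.compl q) u hq'u'
  have huc : u ≤ c := hc.1 (Set.mem_insert_of_mem _ rfl)
  have hq'c : O.compl q ≤ c := hc.1 (Set.mem_insert _ _)
  have hc'u' : O.compl c ≤ O.compl u := O.antitone u c huc
  have hc'q : O.compl c ≤ q := by
    have := O.antitone (O.compl q) c hq'c
    rwa [O.involution] at this
  have hcn' : c ≤ O.compl n := by
    apply hc.2
    rw [mem_ub_pair]
    constructor
    · exact O.antitone n q hnq
    · have := O.antitone n (O.compl u) hnu
      rwa [O.involution] at this
  have hnc' : n ≤ O.compl c := by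
    have := O.antitone c (O.compl n) hcn'
    rwa [O.involution] at this
  have hne : n = O.compl c := hnmax _ (mem_lb_pair.mpr ⟨hc'q, hc'u'⟩) hnc'
  obtain ⟨k, hk⟩ := O.join_of_orth (O.compl c) u hc'u'
  have hkq : k = q := O.orthomodular u q c k huq hc hk
  rw [hne, Set.pair_comm]
  rw [hkq] at hk
  exact hk

end Aux

set_option linter.unusedVariables false in
/-- The assigned implication operator satisfies condition (C):
`x → y` equals the set of all elements of `(y → u) → u` where `u` ranges over
the maximal common lower bounds of `x'` and `y'`. -/
theorem omp_condition_C {P : Type*} [PartialOrder P] [BoundedOrder P]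
    (O : OrthomodularPoset P) (hfin : FiniteHeight P) (x y : P) :
    ompImpl O x y =
      {v : P | ∃ u : P, u ≤ O.compl x ∧ u ≤ O.compl y ∧
        (∀ w : P, u ≤ w → w ≤ O.compl x → w ≤ O.compl y → u = w) ∧
        ∃ a ∈ ompImpl O y u, v ∈ ompImpl O a u} := by
  ext z
  simp only [Set.mem_setOf_eq]
  constructor
  · -- forward direction
    rintro ⟨m, ⟨hmlb, hmmax⟩, hlub⟩
    obtain ⟨hmx, hmy⟩ := mem_lb_pair.mp hmlb
    have hyz : y ≤ z := hlub.1 (Set.mem_insert _ _)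
    have hmz : m ≤ z := hlub.1 (Set.mem_insert_of_mem _ rfl)
    have hz'y' : O.compl z ≤ O.compl y := O.antitone y z hyz
    have hz'm' : O.compl z ≤ O.compl m := O.antitone m z hmz
    have hym' : y ≤ O.compl m := by
      have := O.antitone m (O.compl y) hmy
      rwa [O.involution] at this
    refine ⟨m, hmx, hmy, ?_, ?_⟩
    · intro w h1 h2 h3
      exact hmmax w (mem_lb_pair.mpr ⟨h2, h3⟩) h1
    · -- a := y'
      have hmain : IsLUB {m, O.compl z} (O.compl y) := by
        obtain ⟨k, hk⟩ := O.join_of_orth (O.compl z) m hz'm'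
        have h1 : IsLUB {O.compl (O.compl y), m} z := by
          rw [O.involution]; exact hlub
        have hkq : k = O.compl y := O.orthomodular m (O.compl y) z k hmy h1 hk
        rw [Set.pair_comm, ← hkq]
        exact hk
      refine ⟨O.compl y, ⟨O.compl z, ⟨mem_lb_pair.mpr ⟨hz'y', hz'm'⟩, ?_⟩, hmain⟩,
        y, ⟨mem_lb_pair.mpr ⟨?_, hym'⟩, ?_⟩, ?_⟩
      · -- maximality of z' in L(y', m')
        intro w hw hzw
        obtain ⟨hwy', hwm'⟩ := mem_lb_pair.mp hw
        have hyw' : y ≤ O.compl w := by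
          have := O.antitone w (O.compl y) hwy'
          rwa [O.involution] at this
        have hmw' : m ≤ O.compl w := by
          have := O.antitone w (O.compl m) hwm'
          rwa [O.involution] at this
        have hzw' : z ≤ O.compl w := hlub.2 (mem_ub_pair.mpr ⟨hyw', hmw'⟩)
        have : w ≤ O.compl z := by
          have := O.antitone z (O.compl w) hzw'
          rwa [O.involution] at this
        exact le_antisymm hzw this
      · rw [O.involution]
      · -- maximality of y in L(y'', m')
        intro w hw hyw
        have : w ≤ y := by
          have := (mem_lb_pair.mp hw).1
          rwa [O.involution] at this
        exact le_antisymm hyw this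
      · rw [Set.pair_comm]; exact hlub
  · -- backward direction
    rintro ⟨u, hux, huy, humax, a, ⟨n, hn, hna⟩, k, ⟨hklb, hkmax⟩, hkv⟩
    have hkey : IsLUB {u, n} (O.compl y) := omp_key O huy hn
    have haq : a = O.compl y := hna.unique hkey
    subst haq
    have hyu' : y ≤ O.compl u := by
      have := O.antitone u (O.compl y) huy
      rwa [O.involution] at this
    have hky : k ≤ y := by
      have := (mem_lb_pair.mp hklb).1
      rwa [O.involution] at this
    have hkeq : k = y := by
      refine hkmax y (mem_lb_pair.mpr ⟨?_, hyu'⟩) hky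
      rw [O.involution]
    rw [hkeq] at hkv
    refine ⟨u, ⟨mem_lb_pair.mpr ⟨hux, huy⟩, ?_⟩, ?_⟩
    · intro w hw huw
      obtain ⟨h1, h2⟩ := mem_lb_pair.mp hw
      exact humax w huw h1 h2
    · rw [Set.pair_comm]; exact hkv
end

section
/- Let P be an orthomodular poset of finite height and x, y ∈ P with x ⊥ y (i.e. x ≤ y'). Then for every a ∈ x → y and every u ∈ a → y, u is the least upper bound of {x, y}; in particular x ≤ u, y ≤ u, and every common upper bound z of x and y satisfies u ≤ z (the validity of axioms (O7) and (O8) for the assigned implication). -/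
/-- If `x ⊥ y` then every `u ∈ (x → y) → y` is the least upper bound of
`{x, y}`: `x ≤ u`, `y ≤ u`, and every common upper bound `z` of `x` and `y`
satisfies `u ≤ z`. -/
theorem omp_impl_impl_isLUB {P : Type*} [PartialOrder P] [BoundedOrder P]
    (O : OrthomodularPoset P) (hfin : FiniteHeight P) (x y : P)
    (hxy : x ≤ O.compl y) :
    ∀ a ∈ ompImpl O x y, ∀ u ∈ ompImpl O a y,
      x ≤ u ∧ y ≤ u ∧ ∀ z : P, x ≤ z → y ≤ z → u ≤ z := by
  intro a ha u hu
  obtain ⟨m, ⟨hmL, hmMax⟩, hma⟩ := ha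
  obtain ⟨n, ⟨hnL, hnMax⟩, hnu⟩ := hu
  have memxl : O.compl x ∈ ({O.compl x, O.compl y} : Set P) := Or.inl rfl
  have memyl : O.compl y ∈ ({O.compl x, O.compl y} : Set P) := Or.inr rfl
  have hmx' : m ≤ O.compl x := hmL memxl
  have hmy' : m ≤ O.compl y := hmL memyl
  have hyx' : y ≤ O.compl x := by
    have h := O.antitone _ _ hxy
    rwa [O.involution] at h
  have hya : y ≤ a := hma.1 (Or.inl rfl)
  have hmaa : m ≤ a := hma.1 (Or.inr rfl)
  have hax' : a ≤ O.compl x := by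
    refine hma.2 ?_
    rintro b (rfl | rfl)
    · exact hyx'
    · exact hmx'
  have hxa' : x ≤ O.compl a := by
    have h := O.antitone _ _ hax'
    rwa [O.involution] at h
  -- `⊤` is the LUB of `{a, x}`
  have htop : IsLUB ({a, x} : Set P) (⊤ : P) := by
    constructor
    · intro b _; exact le_top
    · intro z hz
      have haz : a ≤ z := hz (Or.inl rfl)
      have hxz : x ≤ z := hz (Or.inr rfl)
      have hzm' : O.compl z ≤ O.compl m := O.antitone _ _ (le_trans hmaa haz)
      obtain ⟨j, hj⟩ := O.join_of_orth (O.compl z) m hzm'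
      have hjL : j ∈ lowerBounds ({O.compl x, O.compl y} : Set P) := by
        rintro b (rfl | rfl)
        · refine hj.2 ?_
          rintro c (rfl | rfl)
          · exact O.antitone _ _ hxz
          · exact hmx'
        · refine hj.2 ?_
          rintro c (rfl | rfl)
          · exact O.antitone _ _ (le_trans hya haz)
          · exact hmy'
      have hmj : m ≤ j := hj.1 (Or.inr rfl)
      have hmeq : m = j := hmMax j hjL hmj
      have hz'z : O.compl z ≤ z := by
        have h1 : O.compl z ≤ j := hj.1 (Or.inl rfl)
        rw [← hmeq] at h1
        exact le_trans h1 (le_trans hmaa haz)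
      have hz0 : O.compl z ≤ ⊥ := by
        refine (O.glb_compl z).2 ?_
        rintro b (rfl | rfl)
        · exact hz'z
        · exact le_rfl
      have hzbot : O.compl z = ⊥ := le_bot_iff.mp hz0
      have : z = ⊤ := by
        rw [← O.involution z, hzbot, omp_compl_bot]
      exact this.ge
  -- orthomodularity gives `x = a'`
  have hca : x = O.compl a := by
    refine O.orthomodular x (O.compl a) ⊤ x hxa' ?_ ?_
    · rw [O.involution]; exact htop
    · rw [omp_compl_top]
      constructor
      · rintro b (rfl | rfl)
        · exact bot_le
        · exact le_rfl
      · intro z hz; exact hz (Or.inr rfl)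
  -- hence `n = x`
  have hnx : n ≤ x := by
    have h := hnL (Or.inl rfl : O.compl a ∈ ({O.compl a, O.compl y} : Set P))
    rwa [← hca] at h
  have hxL : x ∈ lowerBounds ({O.compl a, O.compl y} : Set P) := by
    rintro b (rfl | rfl)
    · exact hca.le
    · exact hxy
  have hneq : n = x := hnMax x hxL hnx
  rw [hneq] at hnu
  refine ⟨hnu.1 (Or.inr rfl), hnu.1 (Or.inl rfl), ?_⟩
  intro z hxz hyz
  refine hnu.2 ?_
  rintro b (rfl | rfl)
  · exact hyz
  · exact hxz
end
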